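/- Let B be a Boolean algebra with a maximal ideal J that is τ-local (i.e. |{y ∈ B : y ≤ x}| ≤ τ for every x ∈ J). Then the number of ultrafilters of B is at most 2^τ + |B|. -/
import Mathlib


universe u

open Cardinal

/-- An ultrafilter of a Boolean algebra, as a set. -/
def IsUltrafilterSet {B : Type u} [BooleanAlgebra B] (D : Set B) : Prop :=
  ⊥ ∉ D ∧ (∀ a b : B, a ∈ D → a ≤ b → b ∈ D) ∧
    (∀ a b : B, a ∈ D → b ∈ D → a ⊓ b ∈ D) ∧ ∀ a : B, a ∈ D ∨ aᶜ ∈ D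

/-- If a Boolean algebra `B` has a maximal ideal `J` that is `τ`-local
(every `x ∈ J` has at most `τ` elements below it), then `B` has at most `2^τ + |B|`
ultrafilters. -/
theorem stmt_14 (B : Type u) [BooleanAlgebra B] (τ : Cardinal.{u}) (hτ : ℵ₀ ≤ τ)
    (J : Order.Ideal B)
    (hmax : (⊤ : B) ∉ J ∧ ∀ b : B, b ∈ J ∨ bᶜ ∈ J)
    (hlocal : ∀ x ∈ J, #{y : B | y ≤ x} ≤ τ) :
    #{D : Set B | IsUltrafilterSet D} ≤ 2 ^ τ + #B := by
  classical
  set T := Option (Σ x : J, Set {y : B // y ≤ (x : B)}) with hT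
  -- the injection
  have key : #{D : Set B | IsUltrafilterSet D} ≤ #T := by
    apply Cardinal.mk_le_of_injective
      (f := fun (D : {D : Set B | IsUltrafilterSet D}) =>
        if h : ∃ x : J, (x : B) ∈ D.1 then
          (some ⟨h.choose, {y | (y : B) ∈ D.1}⟩ : T)
        else none)
    rintro ⟨D, hD⟩ ⟨D', hD'⟩ h
    simp only at h
    split_ifs at h with h1 h2 h2
    · -- both meet J
      have hs := Option.some.inj h
      have haD : ((h1.choose : J) : B) ∈ D := h1.choose_spec
      have haD' : ((h2.choose : J) : B) ∈ D' := h2.choose_spec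
      set x := h1.choose with hx
      set x' := h2.choose with hx'
      clear_value x x'
      obtain ⟨he, ht⟩ := Sigma.mk.inj_iff.1 hs
      subst he
      have htrace : {y : {y : B // y ≤ (x : B)} | (y : B) ∈ D} =
          {y : {y : B // y ≤ (x : B)} | (y : B) ∈ D'} := eq_of_heq ht
      have hxD : (x : B) ∈ D := haD
      have hxD' : (x : B) ∈ D' := by
        have : (⟨(x : B), le_refl _⟩ : {y : B // y ≤ (x : B)}) ∈
            {y : {y : B // y ≤ (x : B)} | (y : B) ∈ D} := hxD
        rw [htrace] at this
        exact this
      have hiff : ∀ b : B, b ∈ D ↔ b ∈ D' := by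
        intro b
        constructor
        · intro hb
          have hbx : b ⊓ (x : B) ∈ D := hD.2.2.1 b x hb hxD
          have : (⟨b ⊓ (x : B), inf_le_right⟩ : {y : B // y ≤ (x : B)}) ∈
              {y : {y : B // y ≤ (x : B)} | (y : B) ∈ D} := hbx
          rw [htrace] at this
          exact hD'.2.1 _ b this inf_le_left
        · intro hb
          have hbx : b ⊓ (x : B) ∈ D' := hD'.2.2.1 b x hb hxD'
          have : (⟨b ⊓ (x : B), inf_le_right⟩ : {y : B // y ≤ (x : B)}) ∈
              {y : {y : B // y ≤ (x : B)} | (y : B) ∈ D'} := hbx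
          rw [← htrace] at this
          exact hD.2.1 _ b this inf_le_left
      exact Subtype.ext (Set.ext hiff)
    · -- both disjoint from J: each equals complement of J
      have comp : ∀ (E : Set B), IsUltrafilterSet E → (¬ ∃ x : J, (x : B) ∈ E) →
          E = {b : B | b ∉ J} := by
        intro E hE hnE
        ext b
        constructor
        · intro hb hbJ
          exact hnE ⟨⟨b, hbJ⟩, hb⟩
        · intro hb
          rcases hE.2.2.2 b with h | h
          · exact h
          · rcases hmax.2 b with hJ | hJc
            · exact absurd hJ hb
            · exact absurd ⟨⟨bᶜ, hJc⟩, h⟩ hnE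
      exact Subtype.ext ((comp D hD h1).trans (comp D' hD' h2).symm)
  refine key.trans ?_
  rw [hT, Cardinal.mk_option]
  have h2τ : ℵ₀ ≤ 2 ^ τ := hτ.trans (Cardinal.cantor τ).le
  have hc : ℵ₀ ≤ 2 ^ τ + #B := h2τ.trans (self_le_add_right _ _)
  refine Cardinal.add_le_of_le hc ?_ (le_trans (by norm_num) hc)
  rw [Cardinal.mk_sigma]
  have hsum : (Cardinal.sum fun x : J => #(Set {y : B // y ≤ (x : B)})) ≤
      Cardinal.sum fun _ : J => 2 ^ τ := by
    apply Cardinal.sum_le_sum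
    intro x
    rw [Cardinal.mk_set]
    exact Cardinal.power_le_power_left two_ne_zero (hlocal x x.2)
  refine hsum.trans ?_
  rw [Cardinal.sum_const']
  have hJB : #J ≤ #B := Cardinal.mk_le_of_injective (f := fun x : J => (x : B)) Subtype.val_injective
  calc #J * 2 ^ τ ≤ #B * 2 ^ τ := mul_le_mul_left hJB _
    _ ≤ max (max (#B) (2 ^ τ)) ℵ₀ := Cardinal.mul_le_max _ _
    _ ≤ 2 ^ τ + #B := by
        refine max_le (max_le ?_ ?_) ?_
        · exact le_add_self
        · exact self_le_add_right _ _
        · exact hc
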